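/- Let n ≥ 1, let 0 = a₀ < a₁ < ⋯ < a_n be real numbers, and let λ₀, λ₁, …, λ_n > 0. For z ∈ ℂ \ {0} define the vector Θ̂(z) ∈ ℝ^{n²+2n} whose components are: |z|^{2a_k} − λ₀/λ_k for k = 1, …, n, together with |z|^{a_k + a_l} cos((a_l − a_k)·arg z) and |z|^{a_k + a_l} sin((a_l − a_k)·arg z) for each pair 0 ≤ k < l ≤ n. Then there exist points p₁, …, p_{n²+2n} ∈ ℂ \ {0} such that the (n²+2n)×(n²+2n) real matrix with columns Θ̂(p₁), …, Θ̂(p_{n²+2n}) is invertible. -/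

import Mathlib

/-- Index type with `n² + 2n` elements: `n` indices of the "diagonal" kind, and, for each
pair `0 ≤ k < l ≤ n`, two indices (a cosine one, `false`, and a sine one, `true`). -/
abbrev TodaIdx (n : ℕ) :=
  Fin n ⊕ ({q : Fin (n + 1) × Fin (n + 1) // q.1 < q.2} × Bool)

open Finset Filter Real Set


lemma exists_det_ne_zero {ι α : Type*} [Fintype ι] [DecidableEq ι] (S : Set α)
    (f : ι → α → ℝ)
    (h : ∀ x : ι → ℝ, (∀ z ∈ S, ∑ i, x i * f i z = 0) → x = 0) :
    ∃ p : ι → α, (∀ t, p t ∈ S) ∧ (Matrix.of fun r t : ι => f r (p t)).det ≠ 0 := by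
  classical
  set v : α → (ι → ℝ) := fun z i => f i z with hv
  have hspan : Submodule.span ℝ (v '' S) = ⊤ := by
    by_contra hne
    obtain ⟨φ, hφne, hφ⟩ := Submodule.exists_dual_map_eq_bot_of_lt_top
      (lt_top_iff_ne_top.2 hne) inferInstance
    set x : ι → ℝ := fun i => φ (Pi.single i 1) with hx
    have hφapp : ∀ u : ι → ℝ, φ u = ∑ i, x i * u i := by
      intro u
      rw [LinearMap.pi_apply_eq_sum_univ φ u]
      refine Finset.sum_congr rfl fun i _ => ?_
      rw [smul_eq_mul, mul_comm]
      congr 2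
      ext j; by_cases hji : i = j <;> simp [Pi.single, Function.update, hji, eq_comm]
    have hx0 : x = 0 := by
      apply h
      intro z hz
      have hmem : v z ∈ Submodule.span ℝ (v '' S) := Submodule.subset_span ⟨z, hz, rfl⟩
      have h2 := hφ ▸ Submodule.mem_map_of_mem (f := φ) hmem
      rw [Submodule.mem_bot] at h2
      rw [← hφapp]; exact h2
    apply hφne
    apply LinearMap.ext
    intro u
    rw [LinearMap.zero_apply, hφapp, hx0]
    simp
  -- extract a basis from the spanning set
  obtain ⟨b, hbsub, hbspan, hbindep⟩ := exists_linearIndependent ℝ (v '' S)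
  rw [hspan] at hbspan
  have hbfin : b.Finite := hbindep.setFinite
  haveI : Fintype b := hbfin.fintype
  let bas : Module.Basis b ℝ (ι → ℝ) := Module.Basis.mk hbindep (by rw [Subtype.range_coe]; exact hbspan.ge)
  have hcard : Fintype.card b = Fintype.card ι := by
    rw [← Module.finrank_eq_card_basis bas, Module.finrank_fintype_fun_eq_card]
  let e : ι ≃ b := (Fintype.equivOfCardEq hcard).symm
  let bas' : Module.Basis ι ℝ (ι → ℝ) := bas.reindex e.symm
  have hbas' : ∀ i, ∃ z ∈ S, v z = bas' i := by
    intro i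
    have : (bas' i : ι → ℝ) ∈ b := by
      have : bas' i = bas (e i) := by simp [bas', Module.Basis.reindex_apply, Equiv.symm_symm]
      rw [this, Module.Basis.mk_apply]
      exact (e i).2
    obtain ⟨z, hz, hvz⟩ := hbsub this
    exact ⟨z, hz, hvz⟩
  choose p hpS hpv using hbas'
  refine ⟨p, hpS, ?_⟩
  have hM : (Matrix.of fun r t : ι => f r (p t)) = (Pi.basisFun ℝ ι).toMatrix bas' := by
    ext r t
    rw [Module.Basis.toMatrix_apply, Pi.basisFun_repr, ← hpv t]
    rfl
  rw [hM]
  have := (Pi.basisFun ℝ ι).isUnit_det bas'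
  rw [Module.Basis.det_apply] at this
  exact this.ne_zero



lemma power_indep (s : Finset ℝ) (c : ℝ → ℝ)
    (h : ∀ r : ℝ, 0 < r → ∑ b ∈ s, c b * r ^ b = 0) : ∀ b ∈ s, c b = 0 := by
  classical
  revert h
  induction s using Finset.induction_on_max with
  | empty => intro _; simp
  | insert m s hmax ih =>
    intro h
    have hms : m ∉ s := fun hm => lt_irrefl m (hmax m hm)
    -- the rescaled sum tends to `c m`
    have h1 : Tendsto (fun r : ℝ => ∑ b ∈ insert m s, c b * r ^ (b - m)) atTop
        (nhds (c m)) := by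
      have : Tendsto (fun r : ℝ => c m * r ^ (m - m) + ∑ b ∈ s, c b * r ^ (b - m)) atTop
          (nhds (c m * 1 + ∑ b ∈ s, (0:ℝ))) := by
        refine Tendsto.add ?_ ?_
        · refine Tendsto.const_mul _ ?_
          simp only [sub_self]
          refine Tendsto.congr' ?_ tendsto_const_nhds
          filter_upwards [eventually_gt_atTop 0] with r hr
          rw [Real.rpow_zero]
        · refine tendsto_finset_sum _ fun b hb => ?_
          have hbm : 0 < m - b := sub_pos.2 (hmax b hb)
          have := (tendsto_rpow_neg_atTop hbm).const_mul (c b)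
          simpa [neg_sub, mul_zero] using this
      simpa [Finset.sum_insert hms, mul_one, Finset.sum_const_zero] using this
    -- but the rescaled sum is eventually `0`
    have h2 : Tendsto (fun r : ℝ => ∑ b ∈ insert m s, c b * r ^ (b - m)) atTop
        (nhds 0) := by
      refine Tendsto.congr' ?_ tendsto_const_nhds
      filter_upwards [eventually_gt_atTop 0] with r hr
      have : ∑ b ∈ insert m s, c b * r ^ (b - m)
          = (∑ b ∈ insert m s, c b * r ^ b) / r ^ m := by
        rw [Finset.sum_div]
        refine Finset.sum_congr rfl fun b _ => ?_
        rw [Real.rpow_sub hr, mul_div_assoc]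
      rw [this, h r hr, zero_div]
    have hcm : c m = 0 := tendsto_nhds_unique h1 h2
    have hrest : ∀ r : ℝ, 0 < r → ∑ b ∈ s, c b * r ^ b = 0 := by
      intro r hr
      have := h r hr
      rw [Finset.sum_insert hms, hcm, zero_mul, zero_add] at this
      exact this
    intro b hb
    rcases Finset.mem_insert.1 hb with rfl | hb
    · exact hcm
    · exact ih hrest b hb



lemma trig_indep (s : Finset ℝ) (hpos : ∀ ω ∈ s, 0 < ω) (c : ℝ) (y sc : ℝ → ℝ)
    (h : ∀ θ ∈ Set.Ioo (-Real.pi) Real.pi,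
      c + ∑ ω ∈ s, (y ω * Real.cos (ω * θ) + sc ω * Real.sin (ω * θ)) = 0) :
    c = 0 ∧ ∀ ω ∈ s, y ω = 0 ∧ sc ω = 0 := by
  classical
  induction s using Finset.induction_on generalizing c y sc with
  | empty =>
    have h0 := h 0 ⟨neg_neg_iff_pos.mpr Real.pi_pos, Real.pi_pos⟩
    simp at h0
    exact ⟨h0, by simp⟩
  | @insert ω₀ s hω₀s ih =>
    have hω₀ : 0 < ω₀ := hpos ω₀ (Finset.mem_insert_self _ _)
    have hposs : ∀ ω ∈ s, 0 < ω := fun ω hω => hpos ω (Finset.mem_insert_of_mem hω)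
    have hmem0 : (0:ℝ) ∈ Set.Ioo (-Real.pi) Real.pi :=
      ⟨neg_neg_iff_pos.mpr Real.pi_pos, Real.pi_pos⟩
    set t := insert ω₀ s with ht
    set g : ℝ → ℝ := fun θ =>
      c + ∑ ω ∈ t, (y ω * Real.cos (ω * θ) + sc ω * Real.sin (ω * θ)) with hg
    set g1 : ℝ → ℝ := fun θ =>
      ∑ ω ∈ t, (sc ω * (ω * Real.cos (ω * θ)) - y ω * (ω * Real.sin (ω * θ))) with hg1
    set g2 : ℝ → ℝ := fun θ =>
      ∑ ω ∈ t, (-(y ω * (ω * ω * Real.cos (ω * θ))) - sc ω * (ω * ω * Real.sin (ω * θ))) with hg2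
    have hdg : ∀ θ : ℝ, HasDerivAt g (g1 θ) θ := by
      intro θ
      have : HasDerivAt (fun θ' => ∑ ω ∈ t, (y ω * Real.cos (ω * θ') + sc ω * Real.sin (ω * θ')))
          (∑ ω ∈ t, (y ω * (-Real.sin (ω * θ) * ω) + sc ω * (Real.cos (ω * θ) * ω))) θ := by
        refine HasDerivAt.fun_sum fun ω _ => ?_
        have hid : HasDerivAt (fun θ' : ℝ => ω * θ') ω θ := by
          simpa using (hasDerivAt_id θ).const_mul ω
        exact (hid.cos.const_mul (y ω)).add (hid.sin.const_mul (sc ω))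
      have := this.const_add c
      refine this.congr_deriv ?_
      rw [hg1]
      refine Finset.sum_congr rfl fun ω _ => by ring
    have hdg1 : ∀ θ : ℝ, HasDerivAt g1 (g2 θ) θ := by
      intro θ
      have : HasDerivAt (fun θ' => ∑ ω ∈ t, (sc ω * (ω * Real.cos (ω * θ')) - y ω * (ω * Real.sin (ω * θ'))))
          (∑ ω ∈ t, (sc ω * (ω * (-Real.sin (ω * θ) * ω)) - y ω * (ω * (Real.cos (ω * θ) * ω)))) θ := by
        refine HasDerivAt.fun_sum fun ω _ => ?_
        have hid : HasDerivAt (fun θ' : ℝ => ω * θ') ω θ := by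
          simpa using (hasDerivAt_id θ).const_mul ω
        exact ((hid.cos.const_mul ω).const_mul (sc ω)).sub ((hid.sin.const_mul ω).const_mul (y ω))
      convert this using 1
      rw [hg2]
      refine Finset.sum_congr rfl fun ω _ => by ring
    -- g vanishes on the interval
    have hg0 : ∀ θ ∈ Set.Ioo (-Real.pi) Real.pi, g θ = 0 := h
    have hopen : IsOpen (Set.Ioo (-Real.pi) Real.pi) := isOpen_Ioo
    have hg10 : ∀ θ ∈ Set.Ioo (-Real.pi) Real.pi, g1 θ = 0 := by
      intro θ hθ
      have hev : g =ᶠ[nhds θ] (fun _ => 0) := by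
        filter_upwards [hopen.mem_nhds hθ] with θ' hθ' using hg0 θ' hθ'
      have := hev.deriv_eq
      rw [(hdg θ).deriv] at this
      simpa using this
    have hg20 : ∀ θ ∈ Set.Ioo (-Real.pi) Real.pi, g2 θ = 0 := by
      intro θ hθ
      have hev : g1 =ᶠ[nhds θ] (fun _ => 0) := by
        filter_upwards [hopen.mem_nhds hθ] with θ' hθ' using hg10 θ' hθ'
      have := hev.deriv_eq
      rw [(hdg1 θ).deriv] at this
      simpa using this
    -- the combination g2 + ω₀² g kills the ω₀ terms
    have hcomb : ∀ θ ∈ Set.Ioo (-Real.pi) Real.pi,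
        (ω₀ * ω₀ * c) + ∑ ω ∈ s, ((ω₀ * ω₀ - ω * ω) * y ω * Real.cos (ω * θ)
          + (ω₀ * ω₀ - ω * ω) * sc ω * Real.sin (ω * θ)) = 0 := by
      intro θ hθ
      have e1 : g2 θ + ω₀ * ω₀ * g θ
          = (ω₀ * ω₀ * c) + ∑ ω ∈ t, ((ω₀ * ω₀ - ω * ω) * y ω * Real.cos (ω * θ)
            + (ω₀ * ω₀ - ω * ω) * sc ω * Real.sin (ω * θ)) := by
        show (∑ ω ∈ t, (-(y ω * (ω * ω * Real.cos (ω * θ))) - sc ω * (ω * ω * Real.sin (ω * θ))))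
            + ω₀ * ω₀ * (c + ∑ ω ∈ t, (y ω * Real.cos (ω * θ) + sc ω * Real.sin (ω * θ))) = _
        rw [mul_add, Finset.mul_sum, add_left_comm, ← Finset.sum_add_distrib]
        congr 1
        refine Finset.sum_congr rfl fun ω _ => by ring
      have e2 : ∑ ω ∈ t, ((ω₀ * ω₀ - ω * ω) * y ω * Real.cos (ω * θ)
            + (ω₀ * ω₀ - ω * ω) * sc ω * Real.sin (ω * θ))
          = ∑ ω ∈ s, ((ω₀ * ω₀ - ω * ω) * y ω * Real.cos (ω * θ)
            + (ω₀ * ω₀ - ω * ω) * sc ω * Real.sin (ω * θ)) := by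
        rw [ht, Finset.sum_insert hω₀s]
        simp
      rw [← e2, ← e1, hg20 θ hθ, hg0 θ hθ]
      ring
    have ihres := ih hposs (ω₀ * ω₀ * c) (fun ω => (ω₀ * ω₀ - ω * ω) * y ω)
      (fun ω => (ω₀ * ω₀ - ω * ω) * sc ω) hcomb
    have hc : c = 0 := by
      have h0 := ihres.1
      have hω₀2 : ω₀ * ω₀ ≠ 0 := by positivity
      exact (mul_eq_zero.1 h0).resolve_left hω₀2
    have hrest : ∀ ω ∈ s, y ω = 0 ∧ sc ω = 0 := by
      intro ω hω
      have hωpos := hposs ω hω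
      have hωne : ω ≠ ω₀ := fun hh => hω₀s (hh ▸ hω)
      have hfac : ω₀ * ω₀ - ω * ω ≠ 0 := by
        intro hh
        have : (ω₀ - ω) * (ω₀ + ω) = 0 := by linarith [hh]
        rcases mul_eq_zero.1 this with h' | h'
        · exact hωne (by linarith)
        · linarith
      have h1 := (ihres.2 ω hω).1
      have h2 := (ihres.2 ω hω).2
      constructor
      · exact (mul_eq_zero.1 h1).resolve_left hfac
      · exact (mul_eq_zero.1 h2).resolve_left hfac
    -- now only the ω₀ terms remain
    have hsingle : ∀ θ ∈ Set.Ioo (-Real.pi) Real.pi,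
        y ω₀ * Real.cos (ω₀ * θ) + sc ω₀ * Real.sin (ω₀ * θ) = 0 := by
      intro θ hθ
      have := h θ hθ
      rw [ht, Finset.sum_insert hω₀s] at this
      have hsum : ∑ ω ∈ s, (y ω * Real.cos (ω * θ) + sc ω * Real.sin (ω * θ)) = 0 := by
        refine Finset.sum_eq_zero fun ω hω => ?_
        rw [(hrest ω hω).1, (hrest ω hω).2]; ring
      rw [hc, hsum] at this
      linarith
    have hy0 : y ω₀ = 0 := by
      have := hsingle 0 hmem0
      simpa using this
    have hsc0 : sc ω₀ = 0 := by
      set θ₀ : ℝ := min 1 (Real.pi / (2 * ω₀)) with hθ₀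
      have hθ₀pos : 0 < θ₀ := lt_min one_pos (by positivity)
      have hθ₀lt : θ₀ < Real.pi := lt_of_le_of_lt (min_le_left _ _) (by
        have := Real.pi_gt_three; linarith)
      have hθ₀mem : θ₀ ∈ Set.Ioo (-Real.pi) Real.pi :=
        ⟨by linarith [Real.pi_pos], hθ₀lt⟩
      have hsin : 0 < Real.sin (ω₀ * θ₀) := by
        apply Real.sin_pos_of_pos_of_lt_pi
        · positivity
        · have h1 : ω₀ * θ₀ ≤ ω₀ * (Real.pi / (2 * ω₀)) :=
            mul_le_mul_of_nonneg_left (min_le_right _ _) hω₀.le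
          have h2 : ω₀ * (Real.pi / (2 * ω₀)) = Real.pi / 2 := by
            field_simp
          linarith [Real.pi_pos]
      have := hsingle θ₀ hθ₀mem
      rw [hy0] at this
      have : sc ω₀ * Real.sin (ω₀ * θ₀) = 0 := by linarith
      exact (mul_eq_zero.1 this).resolve_right (ne_of_gt hsin)
    refine ⟨hc, fun ω hω => ?_⟩
    rcases Finset.mem_insert.1 hω with rfl | hω
    · exact ⟨hy0, hsc0⟩
    · exact hrest ω hω



abbrev TodaPair (n : ℕ) := {q : Fin (n + 1) × Fin (n + 1) // q.1 < q.2}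

lemma toda_indep (n : ℕ) (a : ℕ → ℝ) (ha0 : a 0 = 0)
    (ha : ∀ i, i < n → a i < a (i + 1))
    (c0 : ℝ) (x : TodaIdx n → ℝ)
    (hx : ∀ θ ∈ Set.Ioo (-Real.pi) Real.pi, ∀ r : ℝ, 0 < r →
      c0 + ((∑ k : Fin n, x (Sum.inl k) * r ^ (2 * a ((k : ℕ) + 1)))
        + ∑ q : TodaPair n,
          (x (Sum.inr (q, false)) * Real.cos ((a (q.1.2 : ℕ) - a (q.1.1 : ℕ)) * θ)
            + x (Sum.inr (q, true)) * Real.sin ((a (q.1.2 : ℕ) - a (q.1.1 : ℕ)) * θ))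
            * r ^ (a (q.1.1 : ℕ) + a (q.1.2 : ℕ))) = 0) :
    x = 0 := by
  classical
  have amono : ∀ i j : ℕ, i < j → j ≤ n → a i < a j := by
    intro i j hij hjn
    induction j with
    | zero => omega
    | succ m ihm =>
      rcases Nat.lt_or_ge i m with him | him
      · exact lt_trans (ihm him (by omega)) (ha m (by omega))
      · have him' : i = m := by omega
        subst him'
        exact ha i (by omega)
  have apos : ∀ i : ℕ, 0 < i → i ≤ n → 0 < a i := fun i h1 h2 => ha0 ▸ amono 0 i h1 h2
  have ainj : ∀ i j : ℕ, i ≤ n → j ≤ n → a i = a j → i = j := by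
    intro i j hi hj hij
    rcases lt_trichotomy i j with h | h | h
    · exact absurd hij (ne_of_lt (amono i j h hj))
    · exact h
    · exact absurd hij.symm (ne_of_lt (amono j i h hi))
  have hle : ∀ (q : TodaPair n), ((q.1.1 : ℕ) < (q.1.2 : ℕ)) ∧ (q.1.2 : ℕ) ≤ n :=
    fun q => ⟨q.2, Nat.lt_succ_iff.1 q.1.2.isLt⟩
  have hdfpos : ∀ q : TodaPair n, 0 < a (q.1.2 : ℕ) - a (q.1.1 : ℕ) := by
    intro q
    have := amono (q.1.1 : ℕ) (q.1.2 : ℕ) (hle q).1 (hle q).2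
    linarith
  have hsupos : ∀ q : TodaPair n, 0 < a (q.1.1 : ℕ) + a (q.1.2 : ℕ) := by
    intro q
    have h2 := apos (q.1.2 : ℕ) (by have := (hle q).1; omega) (hle q).2
    have h1 : 0 ≤ a (q.1.1 : ℕ) := by
      rcases Nat.eq_zero_or_pos (q.1.1 : ℕ) with h | h
      · rw [h, ha0]
      · exact le_of_lt (apos _ h (by have := hle q; omega))
    linarith
  -- the finset of exponents
  set S : Finset ℝ := insert 0 ((Finset.univ.image fun k : Fin n => 2 * a ((k : ℕ) + 1))
    ∪ (Finset.univ.image fun q : TodaPair n => a (q.1.1 : ℕ) + a (q.1.2 : ℕ))) with hS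
  -- first separation: by exponents
  have key : ∀ θ ∈ Set.Ioo (-Real.pi) Real.pi, ∀ b ∈ S,
      (if b = 0 then c0 else 0)
      + ((∑ k ∈ Finset.univ.filter (fun k : Fin n => 2 * a ((k : ℕ) + 1) = b), x (Sum.inl k))
      + ∑ q ∈ Finset.univ.filter (fun q : TodaPair n => a (q.1.1 : ℕ) + a (q.1.2 : ℕ) = b),
          (x (Sum.inr (q, false)) * Real.cos ((a (q.1.2 : ℕ) - a (q.1.1 : ℕ)) * θ)
            + x (Sum.inr (q, true)) * Real.sin ((a (q.1.2 : ℕ) - a (q.1.1 : ℕ)) * θ))) = 0 := by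
    intro θ hθ
    refine power_indep S _ ?_
    intro r hr
    have t1 : ∑ b ∈ S, (if b = 0 then c0 else 0) * r ^ b = c0 := by
      have hcongr : ∀ b ∈ S, (if b = 0 then c0 else 0) * r ^ b
          = if b = 0 then c0 * r ^ b else 0 := by
        intro b _; by_cases hb : b = 0 <;> simp [hb]
      rw [Finset.sum_congr rfl hcongr]
      have : ∀ b ∈ S, (if b = 0 then c0 * r ^ b else 0) = if b = 0 then c0 else 0 := by
        intro b _; by_cases hb : b = 0 <;> simp [hb]
      rw [Finset.sum_congr rfl this, Finset.sum_ite_eq' S (0:ℝ) (fun _ => c0)]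
      simp [hS]
    have t2 : ∑ b ∈ S,
        (∑ k ∈ Finset.univ.filter (fun k : Fin n => 2 * a ((k : ℕ) + 1) = b), x (Sum.inl k)) * r ^ b
        = ∑ k : Fin n, x (Sum.inl k) * r ^ (2 * a ((k : ℕ) + 1)) := by
      have hcongr : ∀ b ∈ S,
          (∑ k ∈ Finset.univ.filter (fun k : Fin n => 2 * a ((k : ℕ) + 1) = b), x (Sum.inl k)) * r ^ b
          = ∑ k ∈ Finset.univ.filter (fun k : Fin n => 2 * a ((k : ℕ) + 1) = b),
              x (Sum.inl k) * r ^ (2 * a ((k : ℕ) + 1)) := by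
        intro b _
        rw [Finset.sum_mul]
        refine Finset.sum_congr rfl fun k hk => ?_
        rw [(Finset.mem_filter.1 hk).2]
      rw [Finset.sum_congr rfl hcongr]
      exact Finset.sum_fiberwise_of_maps_to (fun k _ => by
        rw [hS]
        exact Finset.mem_insert_of_mem (Finset.mem_union_left _
          (Finset.mem_image_of_mem _ (Finset.mem_univ k)))) _
    have t3 : ∑ b ∈ S,
        (∑ q ∈ Finset.univ.filter (fun q : TodaPair n => a (q.1.1 : ℕ) + a (q.1.2 : ℕ) = b),
          (x (Sum.inr (q, false)) * Real.cos ((a (q.1.2 : ℕ) - a (q.1.1 : ℕ)) * θ)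
            + x (Sum.inr (q, true)) * Real.sin ((a (q.1.2 : ℕ) - a (q.1.1 : ℕ)) * θ))) * r ^ b
        = ∑ q : TodaPair n,
          (x (Sum.inr (q, false)) * Real.cos ((a (q.1.2 : ℕ) - a (q.1.1 : ℕ)) * θ)
            + x (Sum.inr (q, true)) * Real.sin ((a (q.1.2 : ℕ) - a (q.1.1 : ℕ)) * θ))
            * r ^ (a (q.1.1 : ℕ) + a (q.1.2 : ℕ)) := by
      have hcongr : ∀ b ∈ S,
          (∑ q ∈ Finset.univ.filter (fun q : TodaPair n => a (q.1.1 : ℕ) + a (q.1.2 : ℕ) = b),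
            (x (Sum.inr (q, false)) * Real.cos ((a (q.1.2 : ℕ) - a (q.1.1 : ℕ)) * θ)
              + x (Sum.inr (q, true)) * Real.sin ((a (q.1.2 : ℕ) - a (q.1.1 : ℕ)) * θ))) * r ^ b
          = ∑ q ∈ Finset.univ.filter (fun q : TodaPair n => a (q.1.1 : ℕ) + a (q.1.2 : ℕ) = b),
            (x (Sum.inr (q, false)) * Real.cos ((a (q.1.2 : ℕ) - a (q.1.1 : ℕ)) * θ)
              + x (Sum.inr (q, true)) * Real.sin ((a (q.1.2 : ℕ) - a (q.1.1 : ℕ)) * θ))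
              * r ^ (a (q.1.1 : ℕ) + a (q.1.2 : ℕ)) := by
        intro b _
        rw [Finset.sum_mul]
        refine Finset.sum_congr rfl fun q hq => ?_
        rw [(Finset.mem_filter.1 hq).2]
      rw [Finset.sum_congr rfl hcongr]
      exact Finset.sum_fiberwise_of_maps_to (fun q _ => by
        rw [hS]
        exact Finset.mem_insert_of_mem (Finset.mem_union_right _
          (Finset.mem_image_of_mem _ (Finset.mem_univ q)))) _
    calc ∑ b ∈ S, ((if b = 0 then c0 else 0)
          + ((∑ k ∈ Finset.univ.filter (fun k : Fin n => 2 * a ((k : ℕ) + 1) = b), x (Sum.inl k))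
          + ∑ q ∈ Finset.univ.filter (fun q : TodaPair n => a (q.1.1 : ℕ) + a (q.1.2 : ℕ) = b),
              (x (Sum.inr (q, false)) * Real.cos ((a (q.1.2 : ℕ) - a (q.1.1 : ℕ)) * θ)
                + x (Sum.inr (q, true)) * Real.sin ((a (q.1.2 : ℕ) - a (q.1.1 : ℕ)) * θ)))) * r ^ b
        = (∑ b ∈ S, (if b = 0 then c0 else 0) * r ^ b)
          + ((∑ b ∈ S, (∑ k ∈ Finset.univ.filter (fun k : Fin n => 2 * a ((k : ℕ) + 1) = b),
              x (Sum.inl k)) * r ^ b)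
          + ∑ b ∈ S, (∑ q ∈ Finset.univ.filter
              (fun q : TodaPair n => a (q.1.1 : ℕ) + a (q.1.2 : ℕ) = b),
              (x (Sum.inr (q, false)) * Real.cos ((a (q.1.2 : ℕ) - a (q.1.1 : ℕ)) * θ)
                + x (Sum.inr (q, true)) * Real.sin ((a (q.1.2 : ℕ) - a (q.1.1 : ℕ)) * θ))) * r ^ b) := by
          rw [← Finset.sum_add_distrib, ← Finset.sum_add_distrib]
          refine Finset.sum_congr rfl fun b _ => by ring
      _ = 0 := by
          rw [t1, t2, t3]
          exact hx θ hθ r hr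
  -- second separation: by frequencies, for each exponent b
  have key2 : ∀ b ∈ S,
      ((if b = 0 then c0 else 0)
        + ∑ k ∈ Finset.univ.filter (fun k : Fin n => 2 * a ((k : ℕ) + 1) = b), x (Sum.inl k)) = 0
      ∧ ∀ ω ∈ (Finset.univ.filter
            (fun q : TodaPair n => a (q.1.1 : ℕ) + a (q.1.2 : ℕ) = b)).image
            (fun q : TodaPair n => a (q.1.2 : ℕ) - a (q.1.1 : ℕ)),
          (∑ q ∈ (Finset.univ.filter
              (fun q : TodaPair n => a (q.1.1 : ℕ) + a (q.1.2 : ℕ) = b)).filter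
              (fun q : TodaPair n => a (q.1.2 : ℕ) - a (q.1.1 : ℕ) = ω),
              x (Sum.inr (q, false))) = 0
          ∧ (∑ q ∈ (Finset.univ.filter
              (fun q : TodaPair n => a (q.1.1 : ℕ) + a (q.1.2 : ℕ) = b)).filter
              (fun q : TodaPair n => a (q.1.2 : ℕ) - a (q.1.1 : ℕ) = ω),
              x (Sum.inr (q, true))) = 0 := by
    intro b hb
    have hWpos : ∀ ω ∈ (Finset.univ.filter
        (fun q : TodaPair n => a (q.1.1 : ℕ) + a (q.1.2 : ℕ) = b)).image
        (fun q : TodaPair n => a (q.1.2 : ℕ) - a (q.1.1 : ℕ)), 0 < ω := by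
      intro ω hω
      obtain ⟨q, hq, rfl⟩ := Finset.mem_image.1 hω
      exact hdfpos q
    have htrig : ∀ θ ∈ Set.Ioo (-Real.pi) Real.pi,
        ((if b = 0 then c0 else 0)
          + ∑ k ∈ Finset.univ.filter (fun k : Fin n => 2 * a ((k : ℕ) + 1) = b), x (Sum.inl k))
        + ∑ ω ∈ (Finset.univ.filter
            (fun q : TodaPair n => a (q.1.1 : ℕ) + a (q.1.2 : ℕ) = b)).image
            (fun q : TodaPair n => a (q.1.2 : ℕ) - a (q.1.1 : ℕ)),
            ((∑ q ∈ (Finset.univ.filter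
              (fun q : TodaPair n => a (q.1.1 : ℕ) + a (q.1.2 : ℕ) = b)).filter
              (fun q : TodaPair n => a (q.1.2 : ℕ) - a (q.1.1 : ℕ) = ω),
              x (Sum.inr (q, false))) * Real.cos (ω * θ)
            + (∑ q ∈ (Finset.univ.filter
              (fun q : TodaPair n => a (q.1.1 : ℕ) + a (q.1.2 : ℕ) = b)).filter
              (fun q : TodaPair n => a (q.1.2 : ℕ) - a (q.1.1 : ℕ) = ω),
              x (Sum.inr (q, true))) * Real.sin (ω * θ)) = 0 := by
      intro θ hθ
      have h0 := key θ hθ b hb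
      have hfib : ∑ ω ∈ (Finset.univ.filter
            (fun q : TodaPair n => a (q.1.1 : ℕ) + a (q.1.2 : ℕ) = b)).image
            (fun q : TodaPair n => a (q.1.2 : ℕ) - a (q.1.1 : ℕ)),
            ((∑ q ∈ (Finset.univ.filter
              (fun q : TodaPair n => a (q.1.1 : ℕ) + a (q.1.2 : ℕ) = b)).filter
              (fun q : TodaPair n => a (q.1.2 : ℕ) - a (q.1.1 : ℕ) = ω),
              x (Sum.inr (q, false))) * Real.cos (ω * θ)
            + (∑ q ∈ (Finset.univ.filter
              (fun q : TodaPair n => a (q.1.1 : ℕ) + a (q.1.2 : ℕ) = b)).filter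
              (fun q : TodaPair n => a (q.1.2 : ℕ) - a (q.1.1 : ℕ) = ω),
              x (Sum.inr (q, true))) * Real.sin (ω * θ))
          = ∑ q ∈ Finset.univ.filter
              (fun q : TodaPair n => a (q.1.1 : ℕ) + a (q.1.2 : ℕ) = b),
              (x (Sum.inr (q, false)) * Real.cos ((a (q.1.2 : ℕ) - a (q.1.1 : ℕ)) * θ)
                + x (Sum.inr (q, true)) * Real.sin ((a (q.1.2 : ℕ) - a (q.1.1 : ℕ)) * θ)) := by
        rw [← Finset.sum_fiberwise_of_maps_to
          (g := fun q : TodaPair n => a (q.1.2 : ℕ) - a (q.1.1 : ℕ))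
          (fun q hq => Finset.mem_image_of_mem _ hq)
          (fun q : TodaPair n =>
            x (Sum.inr (q, false)) * Real.cos ((a (q.1.2 : ℕ) - a (q.1.1 : ℕ)) * θ)
              + x (Sum.inr (q, true)) * Real.sin ((a (q.1.2 : ℕ) - a (q.1.1 : ℕ)) * θ))]
        refine Finset.sum_congr rfl fun ω hω => ?_
        rw [Finset.sum_mul, Finset.sum_mul, ← Finset.sum_add_distrib]
        refine Finset.sum_congr rfl fun q hq => ?_
        rw [(Finset.mem_filter.1 hq).2]
      rw [hfib]
      have := key θ hθ b hb
      linarith [this]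
    exact trig_indep _ hWpos _ _ _ htrig
  -- extraction
  funext t
  rcases t with k | ⟨q, bb⟩
  · -- diagonal indices
    have hbS : (2 * a ((k : ℕ) + 1)) ∈ S := by
      rw [hS]
      exact Finset.mem_insert_of_mem (Finset.mem_union_left _
        (Finset.mem_image_of_mem _ (Finset.mem_univ k)))
    have hbne : (2 * a ((k : ℕ) + 1)) ≠ 0 := by
      have := apos ((k : ℕ) + 1) (by omega) (by have := k.isLt; omega)
      positivity
    have hsingle : Finset.univ.filter
        (fun k' : Fin n => 2 * a ((k' : ℕ) + 1) = 2 * a ((k : ℕ) + 1)) = {k} := by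
      ext k'
      simp only [Finset.mem_filter, Finset.mem_univ, true_and, Finset.mem_singleton]
      constructor
      · intro hk'
        have hak : a ((k' : ℕ) + 1) = a ((k : ℕ) + 1) := by linarith
        have := ainj ((k' : ℕ) + 1) ((k : ℕ) + 1)
          (by have := k'.isLt; omega) (by have := k.isLt; omega) hak
        exact Fin.ext (by omega)
      · rintro rfl; rfl
    have h1 := (key2 _ hbS).1
    rw [if_neg hbne, hsingle, Finset.sum_singleton, zero_add] at h1
    simpa using h1
  · -- pair indices
    have hbS : (a (q.1.1 : ℕ) + a (q.1.2 : ℕ)) ∈ S := by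
      rw [hS]
      exact Finset.mem_insert_of_mem (Finset.mem_union_right _
        (Finset.mem_image_of_mem _ (Finset.mem_univ q)))
    have hqF : q ∈ Finset.univ.filter
        (fun q' : TodaPair n => a (q'.1.1 : ℕ) + a (q'.1.2 : ℕ) = a (q.1.1 : ℕ) + a (q.1.2 : ℕ)) :=
      Finset.mem_filter.2 ⟨Finset.mem_univ q, rfl⟩
    have hωW : (a (q.1.2 : ℕ) - a (q.1.1 : ℕ)) ∈ (Finset.univ.filter
        (fun q' : TodaPair n => a (q'.1.1 : ℕ) + a (q'.1.2 : ℕ) = a (q.1.1 : ℕ) + a (q.1.2 : ℕ))).image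
        (fun q' : TodaPair n => a (q'.1.2 : ℕ) - a (q'.1.1 : ℕ)) :=
      Finset.mem_image_of_mem _ hqF
    have hsingle : (Finset.univ.filter
        (fun q' : TodaPair n => a (q'.1.1 : ℕ) + a (q'.1.2 : ℕ) = a (q.1.1 : ℕ) + a (q.1.2 : ℕ))).filter
        (fun q' : TodaPair n => a (q'.1.2 : ℕ) - a (q'.1.1 : ℕ) = a (q.1.2 : ℕ) - a (q.1.1 : ℕ)) = {q} := by
      ext q'
      simp only [Finset.mem_filter, Finset.mem_univ, true_and, Finset.mem_singleton]
      constructor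
      · rintro ⟨h1, h2⟩
        have e1 : a (q'.1.1 : ℕ) = a (q.1.1 : ℕ) := by linarith
        have e2 : a (q'.1.2 : ℕ) = a (q.1.2 : ℕ) := by linarith
        have i1 := ainj _ _ (Nat.lt_succ_iff.1 q'.1.1.isLt) (Nat.lt_succ_iff.1 q.1.1.isLt) e1
        have i2 := ainj _ _ (Nat.lt_succ_iff.1 q'.1.2.isLt) (Nat.lt_succ_iff.1 q.1.2.isLt) e2
        exact Subtype.ext (Prod.ext (Fin.ext i1) (Fin.ext i2))
      · rintro rfl; exact ⟨rfl, rfl⟩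
    have h2 := (key2 _ hbS).2 _ hωW
    cases bb
    · have := h2.1
      rw [hsingle, Finset.sum_singleton] at this
      simpa using this
    · have := h2.2
      rw [hsingle, Finset.sum_singleton] at this
      simpa using this

/-- **Invertibility of the matrix `M₁` (Section 4).** Given `0 = a₀ < a₁ < ⋯ < aₙ` and
`λ₀, …, λₙ > 0`, consider the vector `Θ̂(z) ∈ ℝ^{n²+2n}` with components
`|z|^{2 a_k} - λ₀/λ_k` (`1 ≤ k ≤ n`) and `|z|^{a_k + a_l} cos((a_l - a_k) arg z)`,
`|z|^{a_k + a_l} sin((a_l - a_k) arg z)` (`0 ≤ k < l ≤ n`).  Then there are points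
`p₁, …, p_{n²+2n} ∈ ℂ \ {0}` such that the square matrix with columns
`Θ̂(p₁), …, Θ̂(p_{n²+2n})` is invertible. -/
theorem stmt12 (n : ℕ) (hn : 1 ≤ n)
    (a : ℕ → ℝ) (ha0 : a 0 = 0) (ha : ∀ i, i < n → a i < a (i + 1))
    (lam : ℕ → ℝ) (hlam : ∀ i, i ≤ n → 0 < lam i) :
    ∃ p : TodaIdx n → ℂ,
      (∀ t, p t ≠ 0) ∧
      (Matrix.of (fun r t : TodaIdx n =>
        match r with
        | Sum.inl k =>
            ‖p t‖ ^ (2 * a ((k : ℕ) + 1)) - lam 0 / lam ((k : ℕ) + 1)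
        | Sum.inr (q, bb) =>
            if bb then
              ‖p t‖ ^ (a (q.1.1 : ℕ) + a (q.1.2 : ℕ)) *
                Real.sin ((a (q.1.2 : ℕ) - a (q.1.1 : ℕ)) * Complex.arg (p t))
            else
              ‖p t‖ ^ (a (q.1.1 : ℕ) + a (q.1.2 : ℕ)) *
                Real.cos ((a (q.1.2 : ℕ) - a (q.1.1 : ℕ)) * Complex.arg (p t)))).det ≠ 0 := by
    classical
  have main := exists_det_ne_zero (ι := TodaIdx n) {z : ℂ | z ≠ 0}
    (fun t z => match t with
      | Sum.inl k => ‖z‖ ^ (2 * a ((k : ℕ) + 1)) - lam 0 / lam ((k : ℕ) + 1)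
      | Sum.inr (q, bb) =>
          if bb then
            ‖z‖ ^ (a (q.1.1 : ℕ) + a (q.1.2 : ℕ)) *
              Real.sin ((a (q.1.2 : ℕ) - a (q.1.1 : ℕ)) * Complex.arg z)
          else
            ‖z‖ ^ (a (q.1.1 : ℕ) + a (q.1.2 : ℕ)) *
              Real.cos ((a (q.1.2 : ℕ) - a (q.1.1 : ℕ)) * Complex.arg z))
    ?_
  · obtain ⟨p, hp, hdet⟩ := main
    exact ⟨p, fun t => hp t, hdet⟩
  · intro x hx0
    apply toda_indep n a ha0 ha
      (-∑ k : Fin n, x (Sum.inl k) * (lam 0 / lam ((k : ℕ) + 1))) x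
    intro θ hθ r hr
    set z : ℂ := (r : ℂ) * (Complex.cos θ + Complex.sin θ * Complex.I) with hz
    have habs : ‖z‖ = r := by
      rw [hz, norm_mul, Complex.norm_real, Complex.norm_cos_add_sin_mul_I, mul_one, Real.norm_eq_abs, abs_of_pos hr]
    have harg : Complex.arg z = θ := Complex.arg_mul_cos_add_sin_mul_I hr ⟨hθ.1, hθ.2.le⟩
    have hzne : z ≠ 0 := by
      intro h0
      rw [h0, norm_zero] at habs
      exact absurd habs (ne_of_lt hr)
    have h0 := hx0 z hzne
    have hsum : ∑ t : TodaIdx n, x t * (match t with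
        | Sum.inl k => ‖z‖ ^ (2 * a ((k : ℕ) + 1)) - lam 0 / lam ((k : ℕ) + 1)
        | Sum.inr (q, bb) =>
            if bb then
              ‖z‖ ^ (a (q.1.1 : ℕ) + a (q.1.2 : ℕ)) *
                Real.sin ((a (q.1.2 : ℕ) - a (q.1.1 : ℕ)) * Complex.arg z)
            else
              ‖z‖ ^ (a (q.1.1 : ℕ) + a (q.1.2 : ℕ)) *
                Real.cos ((a (q.1.2 : ℕ) - a (q.1.1 : ℕ)) * Complex.arg z))
        = (∑ k : Fin n, x (Sum.inl k)
            * (‖z‖ ^ (2 * a ((k : ℕ) + 1)) - lam 0 / lam ((k : ℕ) + 1)))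
          + ∑ q : TodaPair n,
            (x (Sum.inr (q, true)) * (‖z‖ ^ (a (q.1.1 : ℕ) + a (q.1.2 : ℕ)) *
                Real.sin ((a (q.1.2 : ℕ) - a (q.1.1 : ℕ)) * Complex.arg z))
              + x (Sum.inr (q, false)) * (‖z‖ ^ (a (q.1.1 : ℕ) + a (q.1.2 : ℕ)) *
                Real.cos ((a (q.1.2 : ℕ) - a (q.1.1 : ℕ)) * Complex.arg z))) := by
      rw [Fintype.sum_sum_type, Fintype.sum_prod_type]
      congr 1
      refine Finset.sum_congr rfl fun q _ => ?_
      rw [Fintype.sum_bool]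
      simp
    rw [hsum, habs, harg] at h0
    have hpair : ∑ q : TodaPair n,
        (x (Sum.inr (q, true)) * (r ^ (a (q.1.1 : ℕ) + a (q.1.2 : ℕ)) *
            Real.sin ((a (q.1.2 : ℕ) - a (q.1.1 : ℕ)) * θ))
          + x (Sum.inr (q, false)) * (r ^ (a (q.1.1 : ℕ) + a (q.1.2 : ℕ)) *
            Real.cos ((a (q.1.2 : ℕ) - a (q.1.1 : ℕ)) * θ)))
        = ∑ q : TodaPair n,
          (x (Sum.inr (q, false)) * Real.cos ((a (q.1.2 : ℕ) - a (q.1.1 : ℕ)) * θ)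
            + x (Sum.inr (q, true)) * Real.sin ((a (q.1.2 : ℕ) - a (q.1.1 : ℕ)) * θ))
            * r ^ (a (q.1.1 : ℕ) + a (q.1.2 : ℕ)) := by
      refine Finset.sum_congr rfl fun q _ => by ring
    have hdiag : ∑ k : Fin n, x (Sum.inl k)
          * (r ^ (2 * a ((k : ℕ) + 1)) - lam 0 / lam ((k : ℕ) + 1))
        = (∑ k : Fin n, x (Sum.inl k) * r ^ (2 * a ((k : ℕ) + 1)))
          - ∑ k : Fin n, x (Sum.inl k) * (lam 0 / lam ((k : ℕ) + 1)) := by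
      rw [← Finset.sum_sub_distrib]
      refine Finset.sum_congr rfl fun k _ => by ring
    rw [hpair, hdiag] at h0
    linarith [h0]
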